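/- arXiv:2310.10767 — 6 statements merged into one kernel-verified Lean document; each statement's English description precedes it below -/
import Mathlib

section
/- Let n ≥ 1 be an integer, let φ : ℝ → ℝ be 1-Lipschitz, let W be an n×n real matrix with operator norm ‖W‖ ≤ γ for some 0 < γ < 1, and let b, b' ∈ ℝ^n. Define h^0 = 0, h^{ℓ+1} = φ.(W h^ℓ + b) and h'^0 = 0, h'^{ℓ+1} = φ.(W h'^ℓ + b') (φ applied entrywise). Assume ‖h^1‖ ≤ √n and ‖h'^1‖ ≤ √n. Then for all integers k ≥ ℓ ≥ 0, |(1/n)⟨h^ℓ, h'^ℓ⟩ − (1/n)⟨h^k, h'^k⟩| ≤ 2 γ^ℓ / (1 − γ)², where ⟨·,·⟩ and ‖·‖ are the Euclidean inner product and norm on ℝ^n. -/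
open Matrix Finset

lemma my_norm_le {n : ℕ} (x y : EuclideanSpace ℝ (Fin n))
    (hxy : ∀ i, |x i| ≤ |y i|) : ‖x‖ ≤ ‖y‖ := by
  rw [EuclideanSpace.norm_eq, EuclideanSpace.norm_eq]
  apply Real.sqrt_le_sqrt
  apply Finset.sum_le_sum
  intro i _
  rw [Real.norm_eq_abs, Real.norm_eq_abs]
  exact pow_le_pow_left₀ (abs_nonneg _) (hxy i) 2

lemma my_aux {n : ℕ} (φ : ℝ → ℝ) (hφ : LipschitzWith 1 φ)
    (T : EuclideanSpace ℝ (Fin n) →L[ℝ] EuclideanSpace ℝ (Fin n))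
    (γ : ℝ) (hγ0 : 0 ≤ γ) (hγ1 : γ < 1) (hT : ‖T‖ ≤ γ)
    (c : EuclideanSpace ℝ (Fin n)) (g : ℕ → EuclideanSpace ℝ (Fin n))
    (g0 : g 0 = 0)
    (grec : ∀ ℓ : ℕ, ∀ i : Fin n, g (ℓ + 1) i = φ (T (g ℓ) i + c i))
    (s : ℝ) (hs : 0 ≤ s) (gn : ‖g 1‖ ≤ s) :
    (∀ ℓ, ‖g (ℓ + 1) - g ℓ‖ ≤ γ ^ ℓ * s) ∧ (∀ ℓ, ‖g ℓ‖ ≤ s / (1 - γ)) := by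
  have hdiff : ∀ ℓ, ‖g (ℓ + 1) - g ℓ‖ ≤ γ ^ ℓ * s := by
    intro ℓ
    induction ℓ with
    | zero => simpa [g0] using gn
    | succ m ih =>
        have step : ‖g (m + 2) - g (m + 1)‖ ≤ γ * ‖g (m + 1) - g m‖ := by
          have h1 : ‖g (m + 2) - g (m + 1)‖ ≤ ‖T (g (m + 1) - g m)‖ := by
            apply my_norm_le
            intro i
            have e1 : (g (m + 2) - g (m + 1)) i = g (m + 2) i - g (m + 1) i := rfl
            rw [e1, grec (m + 1) i, grec m i]
            calc |φ (T (g (m+1)) i + c i) - φ (T (g m) i + c i)|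
                ≤ |(T (g (m+1)) i + c i) - (T (g m) i + c i)| := by
                  have := hφ.dist_le_mul (T (g (m+1)) i + c i) (T (g m) i + c i)
                  simpa [Real.dist_eq] using this
              _ = |(T (g (m+1) - g m)) i| := by
                  rw [map_sub]
                  have : (T (g (m+1)) - T (g m)) i = T (g (m+1)) i - T (g m) i := rfl
                  rw [this]; ring_nf
              _ ≤ |(T (g (m+1) - g m)) i| := le_refl _
          calc ‖g (m + 2) - g (m + 1)‖ ≤ ‖T (g (m + 1) - g m)‖ := h1
            _ ≤ ‖T‖ * ‖g (m + 1) - g m‖ := T.le_opNorm _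
            _ ≤ γ * ‖g (m + 1) - g m‖ := by
                apply mul_le_mul_of_nonneg_right hT (norm_nonneg _)
        calc ‖g (m + 2) - g (m + 1)‖ ≤ γ * ‖g (m + 1) - g m‖ := step
          _ ≤ γ * (γ ^ m * s) := mul_le_mul_of_nonneg_left ih hγ0
          _ = γ ^ (m + 1) * s := by ring
  refine ⟨hdiff, ?_⟩
  have hsum : ∀ ℓ, ‖g ℓ‖ ≤ s * ∑ j ∈ Finset.range ℓ, γ ^ j := by
    intro ℓ
    induction ℓ with
    | zero => simp [g0]
    | succ m ih =>
        calc ‖g (m + 1)‖ = ‖g m + (g (m + 1) - g m)‖ := by congr 1; abel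
          _ ≤ ‖g m‖ + ‖g (m + 1) - g m‖ := norm_add_le _ _
          _ ≤ s * ∑ j ∈ Finset.range m, γ ^ j + γ ^ m * s := add_le_add ih (hdiff m)
          _ = s * ∑ j ∈ Finset.range (m + 1), γ ^ j := by
              rw [Finset.sum_range_succ]; ring
  intro ℓ
  have hgeom : ∑ j ∈ Finset.range ℓ, γ ^ j ≤ 1 / (1 - γ) := by
    have h1γ : 0 < 1 - γ := by linarith
    have hgℓ : 0 ≤ γ ^ ℓ := pow_nonneg hγ0 ℓ
    rw [geom_sum_eq (by linarith : γ ≠ 1)]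
    have e : (γ ^ ℓ - 1) / (γ - 1) = (1 - γ ^ ℓ) / (1 - γ) := by
      rw [← neg_div_neg_eq]; ring_nf
    rw [e, div_le_div_iff₀ h1γ h1γ]
    nlinarith
  calc ‖g ℓ‖ ≤ s * ∑ j ∈ Finset.range ℓ, γ ^ j := hsum ℓ
    _ ≤ s * (1 / (1 - γ)) := mul_le_mul_of_nonneg_left hgeom hs
    _ = s / (1 - γ) := by ring

open Matrix

/-- Control of the empirical covariance `(1/n)⟨h^ℓ, h'^ℓ⟩` along two DEQ iterations with
the same weight matrix, under the normalization `‖h^1‖, ‖h'^1‖ ≤ √n`. -/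
theorem stmt2 (n : ℕ) (hn : 1 ≤ n) (φ : ℝ → ℝ) (hφ : LipschitzWith 1 φ)
    (W : Matrix (Fin n) (Fin n) ℝ) (γ : ℝ) (hγ0 : 0 < γ) (hγ1 : γ < 1)
    (hW : ‖Matrix.toEuclideanCLM (𝕜 := ℝ) W‖ ≤ γ)
    (b b' : EuclideanSpace ℝ (Fin n))
    (h h' : ℕ → EuclideanSpace ℝ (Fin n))
    (h0 : h 0 = 0) (h0' : h' 0 = 0)
    (hrec : ∀ ℓ : ℕ, ∀ i : Fin n,
      h (ℓ + 1) i = φ (Matrix.toEuclideanCLM (𝕜 := ℝ) W (h ℓ) i + b i))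
    (hrec' : ∀ ℓ : ℕ, ∀ i : Fin n,
      h' (ℓ + 1) i = φ (Matrix.toEuclideanCLM (𝕜 := ℝ) W (h' ℓ) i + b' i))
    (hn1 : ‖h 1‖ ≤ Real.sqrt n) (hn1' : ‖h' 1‖ ≤ Real.sqrt n) :
    ∀ ℓ k : ℕ, ℓ ≤ k →
      |(1 / (n : ℝ)) * (inner ℝ (h ℓ) (h' ℓ) : ℝ) -
        (1 / (n : ℝ)) * (inner ℝ (h k) (h' k) : ℝ)| ≤ 2 * γ ^ ℓ / (1 - γ) ^ 2 := by
  have h1γ : 0 < 1 - γ := by linarith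
  have hsq : 0 ≤ Real.sqrt n := Real.sqrt_nonneg _
  have hsqsq : Real.sqrt n * Real.sqrt n = n :=
    Real.mul_self_sqrt (Nat.cast_nonneg n)
  have hnpos : (0 : ℝ) < n := by exact_mod_cast hn
  obtain ⟨hd, hb⟩ := my_aux φ hφ (Matrix.toEuclideanCLM (𝕜 := ℝ) W) γ hγ0.le hγ1 hW
    b h h0 hrec _ hsq hn1
  obtain ⟨hd', hb'⟩ := my_aux φ hφ (Matrix.toEuclideanCLM (𝕜 := ℝ) W) γ hγ0.le hγ1 hW
    b' h' h0' hrec' _ hsq hn1'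
  set S : ℕ → ℝ := fun ℓ => (inner ℝ (h ℓ) (h' ℓ) : ℝ) with hS
  have hstep : ∀ j : ℕ, |S (j + 1) - S j| ≤ (2 * n / (1 - γ)) * γ ^ j := by
    intro j
    have e : S (j + 1) - S j =
        (inner ℝ (h (j + 1) - h j) (h' (j + 1)) : ℝ) +
        (inner ℝ (h j) (h' (j + 1) - h' j) : ℝ) := by
      simp only [hS, inner_sub_left, inner_sub_right]
      ring
    rw [e]
    have t1 : |(inner ℝ (h (j + 1) - h j) (h' (j + 1)) : ℝ)| ≤
        (γ ^ j * Real.sqrt n) * (Real.sqrt n / (1 - γ)) := by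
      calc |(inner ℝ (h (j + 1) - h j) (h' (j + 1)) : ℝ)|
          ≤ ‖h (j + 1) - h j‖ * ‖h' (j + 1)‖ := abs_real_inner_le_norm _ _
        _ ≤ (γ ^ j * Real.sqrt n) * (Real.sqrt n / (1 - γ)) := by
            apply mul_le_mul (hd j) (hb' (j + 1)) (norm_nonneg _)
            positivity
    have t2 : |(inner ℝ (h j) (h' (j + 1) - h' j) : ℝ)| ≤
        (Real.sqrt n / (1 - γ)) * (γ ^ j * Real.sqrt n) := by
      calc |(inner ℝ (h j) (h' (j + 1) - h' j) : ℝ)|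
          ≤ ‖h j‖ * ‖h' (j + 1) - h' j‖ := abs_real_inner_le_norm _ _
        _ ≤ (Real.sqrt n / (1 - γ)) * (γ ^ j * Real.sqrt n) := by
            apply mul_le_mul (hb j) (hd' j) (norm_nonneg _)
            positivity
    calc |(inner ℝ (h (j + 1) - h j) (h' (j + 1)) : ℝ) +
          (inner ℝ (h j) (h' (j + 1) - h' j) : ℝ)|
        ≤ |(inner ℝ (h (j + 1) - h j) (h' (j + 1)) : ℝ)| +
          |(inner ℝ (h j) (h' (j + 1) - h' j) : ℝ)| := abs_add_le _ _
      _ ≤ (γ ^ j * Real.sqrt n) * (Real.sqrt n / (1 - γ)) +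
          (Real.sqrt n / (1 - γ)) * (γ ^ j * Real.sqrt n) := add_le_add t1 t2
      _ = (2 * (Real.sqrt n * Real.sqrt n) / (1 - γ)) * γ ^ j := by ring
      _ = (2 * n / (1 - γ)) * γ ^ j := by rw [hsqsq]
  have hIco : ∀ ℓ k : ℕ, ℓ ≤ k →
      |S ℓ - S k| ≤ (2 * n / (1 - γ)) * ∑ j ∈ Finset.Ico ℓ k, γ ^ j := by
    intro ℓ k hlk
    induction k with
    | zero =>
        have : ℓ = 0 := Nat.le_zero.mp hlk
        simp [this]
    | succ m ih =>
        rcases Nat.lt_or_ge ℓ (m + 1) with hlt | hge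
        · have hlm : ℓ ≤ m := Nat.lt_succ_iff.mp hlt
          calc |S ℓ - S (m + 1)| = |(S ℓ - S m) + (S m - S (m + 1))| := by ring_nf
            _ ≤ |S ℓ - S m| + |S m - S (m + 1)| := abs_add_le _ _
            _ ≤ (2 * n / (1 - γ)) * ∑ j ∈ Finset.Ico ℓ m, γ ^ j
                + (2 * n / (1 - γ)) * γ ^ m := by
                  apply add_le_add (ih hlm)
                  rw [abs_sub_comm]; exact hstep m
            _ = (2 * n / (1 - γ)) * ∑ j ∈ Finset.Ico ℓ (m + 1), γ ^ j := by
                  rw [Finset.sum_Ico_succ_top hlm]; ring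
        · have : ℓ = m + 1 := le_antisymm hlk hge
          simp [this]
  intro ℓ k hlk
  have hgeo : ∑ j ∈ Finset.Ico ℓ k, γ ^ j ≤ γ ^ ℓ / (1 - γ) := by
    rw [geom_sum_Ico (by linarith : γ ≠ 1) hlk]
    have e : (γ ^ k - γ ^ ℓ) / (γ - 1) = (γ ^ ℓ - γ ^ k) / (1 - γ) := by
      rw [← neg_div_neg_eq]; ring_nf
    rw [e, div_le_div_iff₀ h1γ h1γ]
    have : 0 ≤ γ ^ k := pow_nonneg hγ0.le k
    nlinarith
  have key : |S ℓ - S k| ≤ (2 * n / (1 - γ)) * (γ ^ ℓ / (1 - γ)) := by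
    calc |S ℓ - S k| ≤ (2 * n / (1 - γ)) * ∑ j ∈ Finset.Ico ℓ k, γ ^ j :=
          hIco ℓ k hlk
      _ ≤ (2 * n / (1 - γ)) * (γ ^ ℓ / (1 - γ)) := by
          apply mul_le_mul_of_nonneg_left hgeo
          positivity
  have e2 : (1 / (n : ℝ)) * (inner ℝ (h ℓ) (h' ℓ) : ℝ) -
      (1 / (n : ℝ)) * (inner ℝ (h k) (h' k) : ℝ) = (1 / n) * (S ℓ - S k) := by
    simp [hS]; ring
  rw [e2, abs_mul, abs_of_nonneg (by positivity : (0:ℝ) ≤ 1 / (n:ℝ))]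
  calc (1 / (n : ℝ)) * |S ℓ - S k|
      ≤ (1 / n) * ((2 * n / (1 - γ)) * (γ ^ ℓ / (1 - γ))) := by
        apply mul_le_mul_of_nonneg_left key (by positivity)
    _ = 2 * γ ^ ℓ / (1 - γ) ^ 2 := by field_simp
end

section
/- Let f : ℝ → ℝ be differentiable and suppose f(x)·e^{x²} → 0 and f'(x)·e^{x²} → 0 as |x| → ∞. Fix μ ∈ ℝ and define F(σ) = ∫_ℝ f(μ + σ z) dγ(z), where γ = N(0,1) is the standard Gaussian measure on ℝ. Then for every σ > 0, F is differentiable at σ with derivative F'(σ) = (1/σ) ∫_ℝ f(μ + σ z)(z² − 1) dγ(z). -/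
open MeasureTheory ProbabilityTheory Filter Real

noncomputable def pAux (μ s x : ℝ) : ℝ :=
  (Real.sqrt (2 * Real.pi))⁻¹ * (s⁻¹ * Real.exp (-(x - μ)^2 / (2 * s^2)))

noncomputable def pAux' (μ s x : ℝ) : ℝ :=
  (Real.sqrt (2 * Real.pi))⁻¹ *
    (((x - μ)^2 * (s⁻¹)^4 - (s⁻¹)^2) * Real.exp (-(x - μ)^2 / (2 * s^2)))

lemma pAux_hasDerivAt (μ x : ℝ) {s : ℝ} (hs : s ≠ 0) :
    HasDerivAt (fun s => pAux μ s x) (pAux' μ s x) s := by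
  set a : ℝ := (x - μ)^2 with ha
  have h2 : HasDerivAt (fun s : ℝ => -a / (2 * s ^ 2)) (a * (s⁻¹)^3) s := by
    have hpow : HasDerivAt (fun s : ℝ => s ^ 2) (2 * s) s := by
      simpa using hasDerivAt_pow 2 s
    have hinv : HasDerivAt (fun s : ℝ => (s ^ 2)⁻¹) (-(2 * s) / (s ^ 2) ^ 2) s :=
      hpow.inv (pow_ne_zero 2 hs)
    have := hinv.const_mul (-a / 2)
    refine HasDerivAt.congr_deriv (HasDerivAt.congr_of_eventuallyEq this (Filter.EventuallyEq.of_eq ?_)) ?_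
    · funext t
      rcases eq_or_ne t 0 with h | h
      · simp [h]
      · field_simp
    · field_simp
  have h3 : HasDerivAt (fun s : ℝ => Real.exp (-a / (2 * s ^ 2)))
      (Real.exp (-a / (2 * s ^ 2)) * (a * (s⁻¹)^3)) s := h2.exp
  have h4 := (hasDerivAt_inv hs).mul h3
  have h5 := h4.const_mul (Real.sqrt (2 * Real.pi))⁻¹
  refine h5.congr_deriv ?_
  simp only [pAux']
  field_simp
  ring

lemma gauss_int (g : ℝ → ℝ) :
    ∫ z, g z ∂(gaussianReal 0 1)
      = ∫ z, g z * ((Real.sqrt (2 * Real.pi))⁻¹ * Real.exp (-z ^ 2 / 2)) := by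
  rw [gaussianReal_of_var_ne_zero _ one_ne_zero]
  have hmeas : Measurable fun x => (gaussianPDFReal 0 1 x).toNNReal :=
    (measurable_gaussianPDFReal 0 1).real_toNNReal
  have heq : volume.withDensity (gaussianPDF 0 1)
      = volume.withDensity fun x => ((gaussianPDFReal 0 1 x).toNNReal : ENNReal) := rfl
  rw [heq, integral_withDensity_eq_integral_smul hmeas]
  congr 1
  funext z
  rw [NNReal.smul_def, smul_eq_mul, Real.coe_toNNReal _ (gaussianPDFReal_nonneg 0 1 z),
    mul_comm]
  congr 1
  have : gaussianPDFReal 0 1 z = (Real.sqrt (2 * Real.pi))⁻¹ * Real.exp (-z ^ 2 / 2) := by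
    simp [gaussianPDFReal]
  rw [this]

lemma change_var (g : ℝ → ℝ) (μ : ℝ) {s : ℝ} (hs : 0 < s) :
    ∫ z, g (μ + s * z) = s⁻¹ * ∫ x, g x := by
  have h1 : (∫ z, g (μ + s * z)) = ∫ z, (fun y => g (μ + y)) (s * z) := rfl
  rw [h1, Measure.integral_comp_mul_left (fun y => g (μ + y)) s,
    MeasureTheory.integral_add_left_eq_self g μ, smul_eq_mul,
    abs_of_pos (inv_pos.mpr hs)]

lemma decay_bound (f : ℝ → ℝ) (hc : Continuous f)
    (hdecay : Tendsto (fun x => f x * Real.exp (x ^ 2)) (cocompact ℝ) (nhds 0)) :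
    ∃ C : ℝ, 0 < C ∧ ∀ x, |f x| ≤ C * Real.exp (-x ^ 2) := by
  have h1 : ∀ᶠ x in cocompact ℝ, |f x| * Real.exp (x ^ 2) ≤ 1 := by
    have := hdecay.eventually (Metric.closedBall_mem_nhds (0 : ℝ) one_pos)
    filter_upwards [this] with x hx
    simpa [Real.dist_eq, abs_mul, Real.abs_exp] using hx
  obtain ⟨K, hK, hKsub⟩ := (hasBasis_cocompact.eventually_iff).mp h1
  obtain ⟨R, hR⟩ := hK.isBounded.subset_closedBall 0
  obtain ⟨M, hM⟩ := (isCompact_closedBall (0:ℝ) R).exists_bound_of_continuousOn hc.continuousOn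
  refine ⟨(|M| + 1) * Real.exp (R ^ 2) + 1, by positivity, fun x => ?_⟩
  rcases le_or_gt (|x|) R with hxR | hxR
  · have hx : x ∈ Metric.closedBall (0:ℝ) R := by
      simpa [Real.dist_eq] using hxR
    have hfx : |f x| ≤ |M| := le_trans (hM x hx) (le_abs_self M)
    have hexp : Real.exp (x ^ 2) ≤ Real.exp (R ^ 2) := by
      apply Real.exp_le_exp.mpr
      calc x ^ 2 = |x| ^ 2 := (sq_abs x).symm
        _ ≤ R ^ 2 := by nlinarith [abs_nonneg x]
    have h0 : |f x| * Real.exp (x ^ 2) ≤ (|M| + 1) * Real.exp (R ^ 2) := by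
      nlinarith [Real.exp_pos (x ^ 2), abs_nonneg (f x)]
    have hepos := Real.exp_pos (-x ^ 2)
    have hkey : |f x| = (|f x| * Real.exp (x ^ 2)) * Real.exp (-x ^ 2) := by
      rw [mul_assoc, ← Real.exp_add]
      simp
    rw [hkey]
    have : (0:ℝ) ≤ Real.exp (-x^2) := hepos.le
    nlinarith
  · have hx : x ∉ K := by
      intro hxK
      have := hR hxK
      simp only [Metric.mem_closedBall, Real.dist_eq, sub_zero] at this
      exact absurd this (not_le.mpr hxR)
    have h2 : |f x| * Real.exp (x ^ 2) ≤ 1 := hKsub hx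
    have hepos := Real.exp_pos (-x ^ 2)
    have hkey : |f x| = (|f x| * Real.exp (x ^ 2)) * Real.exp (-x ^ 2) := by
      rw [mul_assoc, ← Real.exp_add]; simp
    rw [hkey]
    nlinarith [mul_le_mul_of_nonneg_right h2 hepos.le,
      mul_pos (mul_pos (by positivity : (0:ℝ) < |M| + 1) (Real.exp_pos (R ^ 2))) hepos]

/-- Gaussian smoothing identity: derivative in the standard deviation `σ` of
`F(σ) = ∫ f(μ + σ z) dγ(z)` for the standard Gaussian measure `γ`. -/
theorem stmt5 (f : ℝ → ℝ) (hf : Differentiable ℝ f)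
    (hdecay : Tendsto (fun x => f x * Real.exp (x ^ 2)) (cocompact ℝ) (nhds 0))
    (hdecay' : Tendsto (fun x => deriv f x * Real.exp (x ^ 2)) (cocompact ℝ) (nhds 0))
    (μ : ℝ) :
    ∀ σ : ℝ, 0 < σ →
      HasDerivAt (fun s : ℝ => ∫ z, f (μ + s * z) ∂(gaussianReal 0 1))
        ((1 / σ) * ∫ z, f (μ + σ * z) * (z ^ 2 - 1) ∂(gaussianReal 0 1)) σ := by
  intro σ hσ
  obtain ⟨C, hC, hfC⟩ := decay_bound f hf.continuous hdecay
  have hcpos : (0:ℝ) < (Real.sqrt (2 * Real.pi))⁻¹ := by positivity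
  set c : ℝ := (Real.sqrt (2 * Real.pi))⁻¹ with hc
  -- exponential factor is at most 1
  have hexple : ∀ (x s : ℝ), Real.exp (-(x - μ)^2 / (2 * s^2)) ≤ 1 := by
    intro x s
    have h : -(x - μ)^2 / (2 * s^2) ≤ 0 := by
      apply div_nonpos_of_nonpos_of_nonneg
      · exact neg_nonpos.mpr (sq_nonneg _)
      · positivity
    calc Real.exp (-(x - μ)^2 / (2 * s^2)) ≤ Real.exp 0 := Real.exp_le_exp.mpr h
      _ = 1 := Real.exp_zero
  -- the key change-of-variables identity
  have key : ∀ s : ℝ, 0 < s →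
      (∫ z, f (μ + s * z) ∂(gaussianReal 0 1)) = ∫ x, f x * pAux μ s x := by
    intro s hs
    rw [gauss_int (fun z => f (μ + s * z))]
    have h1 : (fun z : ℝ => f (μ + s * z) * ((Real.sqrt (2 * Real.pi))⁻¹ * Real.exp (-z ^ 2 / 2)))
        = fun z : ℝ => (fun x => f x * ((Real.sqrt (2 * Real.pi))⁻¹
            * Real.exp (-(x - μ)^2 / (2 * s^2)))) (μ + s * z) := by
      funext z
      simp only
      have e1 : μ + s * z - μ = s * z := by ring
      rw [e1]
      have e2 : -(s * z)^2 / (2 * s^2) = -z^2 / 2 := by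
        field_simp
      rw [e2]
    calc (∫ z, f (μ + s * z) * ((Real.sqrt (2 * Real.pi))⁻¹ * Real.exp (-z ^ 2 / 2)))
        = ∫ z, (fun x => f x * ((Real.sqrt (2 * Real.pi))⁻¹
            * Real.exp (-(x - μ)^2 / (2 * s^2)))) (μ + s * z) := by rw [h1]
      _ = s⁻¹ * ∫ x, f x * ((Real.sqrt (2 * Real.pi))⁻¹
            * Real.exp (-(x - μ)^2 / (2 * s^2))) :=
          change_var (fun x => f x * ((Real.sqrt (2 * Real.pi))⁻¹
            * Real.exp (-(x - μ)^2 / (2 * s^2)))) μ hs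
      _ = ∫ x, s⁻¹ * (f x * ((Real.sqrt (2 * Real.pi))⁻¹
            * Real.exp (-(x - μ)^2 / (2 * s^2)))) := (integral_const_mul _ _).symm
      _ = ∫ x, f x * pAux μ s x := by
          congr 1
          funext x
          simp only [pAux]
          ring
  -- integrability facts
  have hexpint : Integrable fun x : ℝ => Real.exp (-x^2) := by
    simpa using integrable_exp_neg_mul_sq one_pos
  have hx2int : Integrable fun x : ℝ => x ^ 2 * Real.exp (-x^2) := by
    have := integrable_rpow_mul_exp_neg_mul_sq (b := 1) one_pos (s := 2) (by norm_num)
    have h := this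
    simp only [Real.rpow_two, neg_mul, one_mul] at h
    exact h
  set bound : ℝ → ℝ := fun x =>
    (C * Real.exp (-x^2)) * (c * ((2*x^2 + 2*μ^2) * (2/σ)^4 + (2/σ)^2)) with hbound_def
  have hbound_int : Integrable bound := by
    have heq2 : bound = fun x => (C * (c * (2 * (2/σ)^4))) * (x^2 * Real.exp (-x^2))
        + (C * (c * ((2*μ^2) * (2/σ)^4 + (2/σ)^2))) * Real.exp (-x^2) := by
      funext x
      simp only [hbound_def]
      ring
    rw [heq2]
    exact (hx2int.const_mul _).add (hexpint.const_mul _)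
  have hpc : Continuous fun x => pAux μ σ x := by
    simp only [pAux]
    fun_prop
  have hpc' : Continuous fun x => pAux' μ σ x := by
    simp only [pAux']
    fun_prop
  have hF_meas : ∀ᶠ s in nhds σ, AEStronglyMeasurable (fun x => f x * pAux μ s x)
      (volume : Measure ℝ) := by
    filter_upwards with s
    have : Continuous fun x => pAux μ s x := by
      simp only [pAux]; fun_prop
    exact (hf.continuous.mul this).aestronglyMeasurable
  have hF_int : Integrable (fun x => f x * pAux μ σ x) := by
    apply Integrable.mono' ((hexpint.const_mul C).mul_const (c * σ⁻¹))
    · exact (hf.continuous.mul hpc).aestronglyMeasurable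
    · filter_upwards with x
      have h1 : |pAux μ σ x| ≤ c * σ⁻¹ := by
        rw [abs_of_nonneg (by simp only [pAux]; positivity)]
        simp only [pAux]
        calc (Real.sqrt (2 * Real.pi))⁻¹ * (σ⁻¹ * Real.exp (-(x - μ)^2 / (2 * σ^2)))
            ≤ (Real.sqrt (2 * Real.pi))⁻¹ * (σ⁻¹ * 1) := by
              gcongr
              exact hexple x σ
          _ = c * σ⁻¹ := by rw [← hc]; ring
      rw [Real.norm_eq_abs, abs_mul]
      exact mul_le_mul (hfC x) h1 (abs_nonneg _) (by positivity)
  have hF'_meas : AEStronglyMeasurable (fun x => f x * pAux' μ σ x) (volume : Measure ℝ) :=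
    (hf.continuous.mul hpc').aestronglyMeasurable
  have h_bound : ∀ᵐ x : ℝ, ∀ s ∈ Metric.ball σ (σ/2), ‖f x * pAux' μ s x‖ ≤ bound x := by
    filter_upwards with x s hs
    rw [Metric.mem_ball, Real.dist_eq, abs_lt] at hs
    have hs0 : 0 < s := by linarith
    have hinvnn : (0:ℝ) ≤ s⁻¹ := by positivity
    have hsinv : s⁻¹ ≤ 2/σ := by
      have h1 : σ/2 ≤ s := by linarith
      have := inv_anti₀ (by positivity : (0:ℝ) < σ/2) h1
      rwa [inv_div] at this
    have habs : |pAux' μ s x| ≤ c * ((2*x^2 + 2*μ^2) * (2/σ)^4 + (2/σ)^2) := by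
      simp only [pAux']
      rw [abs_mul, abs_of_nonneg hcpos.le, abs_mul, abs_of_nonneg (Real.exp_pos _).le]
      have h1 : |(x - μ)^2 * (s⁻¹)^4 - (s⁻¹)^2| ≤ (x - μ)^2 * (s⁻¹)^4 + (s⁻¹)^2 := by
        rcases abs_cases ((x - μ)^2 * (s⁻¹)^4 - (s⁻¹)^2) with ⟨h, _⟩ | ⟨h, _⟩ <;>
          nlinarith [sq_nonneg (x - μ), pow_nonneg hinvnn 4, sq_nonneg s⁻¹,
            mul_nonneg (sq_nonneg (x - μ)) (pow_nonneg hinvnn 4)]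
      have h2 : (x - μ)^2 * (s⁻¹)^4 + (s⁻¹)^2 ≤ (2*x^2 + 2*μ^2) * (2/σ)^4 + (2/σ)^2 := by
        have e1 : (x - μ)^2 ≤ 2*x^2 + 2*μ^2 := by nlinarith [sq_nonneg (x + μ)]
        have e2 : (s⁻¹)^4 ≤ (2/σ)^4 := pow_le_pow_left₀ hinvnn hsinv 4
        have e3 : (s⁻¹)^2 ≤ (2/σ)^2 := pow_le_pow_left₀ hinvnn hsinv 2
        have e4 := mul_le_mul e1 e2 (pow_nonneg hinvnn 4) (by positivity)
        linarith
      calc c * (|(x - μ)^2 * (s⁻¹)^4 - (s⁻¹)^2| * Real.exp (-(x - μ)^2 / (2 * s^2)))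
          ≤ c * (((x - μ)^2 * (s⁻¹)^4 + (s⁻¹)^2) * 1) := by
            apply mul_le_mul_of_nonneg_left _ hcpos.le
            exact mul_le_mul h1 (hexple x s) (Real.exp_pos _).le (by positivity)
        _ ≤ c * ((2*x^2 + 2*μ^2) * (2/σ)^4 + (2/σ)^2) := by
            rw [mul_one]
            exact mul_le_mul_of_nonneg_left h2 hcpos.le
    rw [Real.norm_eq_abs, abs_mul]
    simp only [hbound_def]
    exact mul_le_mul (hfC x) habs (abs_nonneg _) (by positivity)
  have h_diff : ∀ᵐ x : ℝ, ∀ s ∈ Metric.ball σ (σ/2),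
      HasDerivAt (fun s => f x * pAux μ s x) (f x * pAux' μ s x) s := by
    filter_upwards with x s hs
    rw [Metric.mem_ball, Real.dist_eq, abs_lt] at hs
    have hs0 : s ≠ 0 := by intro h; rw [h] at hs; linarith [hs.1]
    exact (pAux_hasDerivAt μ x hs0).const_mul (f x)
  have main := (hasDerivAt_integral_of_dominated_loc_of_deriv_le
    (Metric.ball_mem_nhds σ (by positivity : (0:ℝ) < σ/2)) hF_meas hF_int hF'_meas h_bound hbound_int h_diff).2
  -- identify the value of the derivative
  have hval : (1/σ) * (∫ z, f (μ + σ * z) * (z ^ 2 - 1) ∂(gaussianReal 0 1))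
      = ∫ x, f x * pAux' μ σ x := by
    rw [gauss_int (fun z => f (μ + σ * z) * (z ^ 2 - 1))]
    have h2 : (fun z : ℝ => f (μ + σ * z) * (z ^ 2 - 1)
          * ((Real.sqrt (2 * Real.pi))⁻¹ * Real.exp (-z ^ 2 / 2)))
        = fun z : ℝ => (fun x => f x * (((x - μ)^2 * (σ⁻¹)^2 - 1)
            * ((Real.sqrt (2 * Real.pi))⁻¹ * Real.exp (-(x - μ)^2 / (2 * σ^2))))) (μ + σ * z) := by
      funext z
      simp only
      have e1 : μ + σ * z - μ = σ * z := by ring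
      rw [e1]
      have e2 : (σ * z)^2 * (σ⁻¹)^2 - 1 = z^2 - 1 := by
        field_simp
      have e3 : -(σ * z)^2 / (2 * σ^2) = -z^2 / 2 := by
        field_simp
      rw [e2, e3]
      ring
    rw [h2, change_var (fun x => f x * (((x - μ)^2 * (σ⁻¹)^2 - 1)
      * ((Real.sqrt (2 * Real.pi))⁻¹ * Real.exp (-(x - μ)^2 / (2 * σ^2))))) μ hσ]
    have h3 : (∫ x, f x * pAux' μ σ x)
        = ∫ x, (σ⁻¹ * σ⁻¹) * (f x * (((x - μ)^2 * (σ⁻¹)^2 - 1)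
            * ((Real.sqrt (2 * Real.pi))⁻¹ * Real.exp (-(x - μ)^2 / (2 * σ^2))))) := by
      congr 1
      funext x
      simp only [pAux']
      ring
    rw [h3, integral_const_mul]
    ring
  rw [hval]
  apply main.congr_of_eventuallyEq
  filter_upwards [Ioi_mem_nhds hσ] with s hs
  exact key s hs
end

section
/- Let f : ℝ → ℝ be differentiable and suppose f(x)·e^{x²} → 0 and f'(x)·e^{x²} → 0 as |x| → ∞. Fix σ > 0 and define G(μ) = ∫_ℝ f(μ + σ z) dγ(z), where γ = N(0,1) is the standard Gaussian measure on ℝ. Then for every μ ∈ ℝ, G is differentiable at μ with derivative G'(μ) = (1/σ) ∫_ℝ f(μ + σ z) · z dγ(z). -/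
open MeasureTheory ProbabilityTheory Filter


/-- A continuous function whose product with `exp (x^2)` vanishes at infinity
satisfies a Gaussian bound. -/
lemma aux_bound_of_decay {g : ℝ → ℝ} (hg : Continuous g)
    (h : Tendsto (fun x => g x * Real.exp (x ^ 2)) (cocompact ℝ) (nhds 0)) :
    ∃ C : ℝ, 0 ≤ C ∧ ∀ x, |g x| ≤ C * Real.exp (-x ^ 2) := by
  have hev : ∀ᶠ x in cocompact ℝ, |g x * Real.exp (x ^ 2)| < 1 := by
    have := h (Metric.ball_mem_nhds (0 : ℝ) one_pos)
    simpa [Real.dist_eq, abs_mul, abs_of_pos (Real.exp_pos _)] using this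
  obtain ⟨K, hK, hKs⟩ := (hasBasis_cocompact.eventually_iff).mp hev
  have hcont : ContinuousOn (fun x => |g x * Real.exp (x ^ 2)|) K :=
    ((hg.mul (Real.continuous_exp.comp (continuous_pow 2))).abs).continuousOn
  obtain ⟨C₀, hC₀⟩ := hK.exists_bound_of_continuousOn hcont
  refine ⟨max C₀ 1, le_trans zero_le_one (le_max_right _ _), fun x => ?_⟩
  have hb : |g x * Real.exp (x ^ 2)| ≤ max C₀ 1 := by
    by_cases hx : x ∈ K
    · exact le_trans (by simpa using hC₀ x hx) (le_max_left _ _)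
    · exact le_trans (hKs hx).le (le_max_right _ _)
  have hx2 : Real.exp (-x ^ 2) = (Real.exp (x ^ 2))⁻¹ := by
    rw [← Real.exp_neg]
  have : |g x| * Real.exp (x ^ 2) ≤ max C₀ 1 := by
    rwa [abs_mul, abs_of_pos (Real.exp_pos _)] at hb
  rw [hx2, mul_comm, ← div_eq_inv_mul, le_div_iff₀ (Real.exp_pos _)]
  exact this

/-- Integral against the standard Gaussian measure as a density integral. -/
lemma aux_integral_gaussian (g : ℝ → ℝ) :
    ∫ z, g z ∂(gaussianReal 0 1) = ∫ z, gaussianPDFReal 0 1 z * g z := by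
  rw [gaussianReal_of_var_ne_zero _ one_ne_zero]
  have : (gaussianPDF 0 1) = fun x => ((gaussianPDFReal 0 1 x).toNNReal : ENNReal) := by
    funext x; rfl
  rw [this, integral_withDensity_eq_integral_smul
    ((measurable_gaussianPDFReal 0 1).real_toNNReal) g]
  congr 1
  funext x
  simp [NNReal.smul_def, Real.coe_toNNReal _ (gaussianPDFReal_nonneg 0 1 x)]

/-- Affine substitution in a Lebesgue integral. -/
lemma aux_subst (k : ℝ → ℝ) {σ : ℝ} (hσ : 0 < σ) (m : ℝ) :
    ∫ z, k (m + σ * z) = σ⁻¹ * ∫ u, k u := by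
  have h1 : (fun z : ℝ => k (m + σ * z)) = fun z => (fun u => k (u + m)) (σ * z) := by
    funext z; ring_nf
  rw [h1, Measure.integral_comp_mul_left (fun u => k (u + m)) σ,
    integral_add_right_eq_self (fun u => k u) m]
  simp [abs_of_pos (inv_pos.mpr hσ), smul_eq_mul]


/-- Gaussian smoothing identity: derivative in the mean `μ` of
`G(μ) = ∫ f(μ + σ z) dγ(z)` for the standard Gaussian measure `γ`. -/
theorem stmt6 (f : ℝ → ℝ) (hf : Differentiable ℝ f)
    (hdecay : Tendsto (fun x => f x * Real.exp (x ^ 2)) (cocompact ℝ) (nhds 0))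
    (hdecay' : Tendsto (fun x => deriv f x * Real.exp (x ^ 2)) (cocompact ℝ) (nhds 0))
    (σ : ℝ) (hσ : 0 < σ) :
    ∀ μ : ℝ,
      HasDerivAt (fun m : ℝ => ∫ z, f (m + σ * z) ∂(gaussianReal 0 1))
        ((1 / σ) * ∫ z, f (μ + σ * z) * z ∂(gaussianReal 0 1)) μ := by
  intro μ
  have hσ' : σ ≠ 0 := ne_of_gt hσ
  obtain ⟨C, hC0, hCf⟩ := aux_bound_of_decay hf.continuous hdecay
  -- the standard gaussian density
  set c : ℝ := (Real.sqrt (2 * Real.pi))⁻¹ with hc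
  have hc0 : 0 < c := by
    apply inv_pos.mpr
    exact Real.sqrt_pos.mpr (by positivity)
  set p : ℝ → ℝ := fun x => c * Real.exp (-x ^ 2 / 2) with hp
  have hpdf : gaussianPDFReal 0 1 = p := by
    funext x
    rw [gaussianPDFReal, hp, hc]
    norm_num
  have hp_cont : Continuous p :=
    continuous_const.mul (Real.continuous_exp.comp ((continuous_pow 2).neg.div_const 2))
  have hp_nonneg : ∀ x, 0 ≤ p x := fun x => le_of_lt (mul_pos hc0 (Real.exp_pos _))
  have hp_le : ∀ x, p x ≤ c := by
    intro x
    have : Real.exp (-x ^ 2 / 2) ≤ 1 := Real.exp_le_one_iff.mpr (by nlinarith [sq_nonneg x])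
    calc c * Real.exp (-x ^ 2 / 2) ≤ c * 1 := by
          exact mul_le_mul_of_nonneg_left this hc0.le
      _ = c := mul_one c
  -- key functions
  set F : ℝ → ℝ → ℝ := fun m u => p ((u - m) / σ) * f u with hF
  set F' : ℝ → ℝ → ℝ := fun m u => p ((u - m) / σ) * ((u - m) / σ ^ 2) * f u with hF'
  -- rewriting the smoothed function
  have key : ∀ m : ℝ, (∫ z, f (m + σ * z) ∂(gaussianReal 0 1)) = σ⁻¹ * ∫ u, F m u := by
    intro m
    rw [aux_integral_gaussian, hpdf]
    have h1 : (fun z => p z * f (m + σ * z)) = fun z => F m (m + σ * z) := by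
      funext z
      simp only [hF]
      rw [show (m + σ * z - m) / σ = z by field_simp; ring]
    rw [h1, aux_subst (F m) hσ m]
  -- differentiability in m for each u
  have hderiv : ∀ u : ℝ, ∀ m : ℝ, HasDerivAt (fun m => F m u) (F' m u) m := by
    intro u m
    have h1 : HasDerivAt (fun m : ℝ => (u - m) / σ) (-1 / σ) m := by
      simpa using ((hasDerivAt_id m).const_sub u).div_const σ
    have h2 : HasDerivAt (fun m : ℝ => -((u - m) / σ) ^ 2 / 2)
        (-(2 * ((u - m) / σ) ^ 1 * (-1 / σ)) / 2) m := ((h1.pow 2).neg).div_const 2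
    have h3 := ((h2.exp).const_mul c).mul_const (f u)
    convert h3 using 1
    · rfl
    · rfl
    simp only [hF', hp, pow_one]
    field_simp
  -- integrability bounds
  have hFcont : ∀ m, Continuous (F m) :=
    fun m => (hp_cont.comp ((continuous_id.sub continuous_const).div_const σ)).mul hf.continuous
  have hF'cont : ∀ m, Continuous (F' m) :=
    fun m => ((hp_cont.comp ((continuous_id.sub continuous_const).div_const σ)).mul
      ((continuous_id.sub continuous_const).div_const (σ ^ 2))).mul hf.continuous
  have hexp_int : Integrable (fun u : ℝ => Real.exp (-u ^ 2)) := by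
    simpa using integrable_exp_neg_mul_sq (one_pos)
  have habs_int : Integrable (fun u : ℝ => |u| * Real.exp (-u ^ 2)) := by
    have := (integrable_mul_exp_neg_mul_sq (one_pos)).abs
    refine this.congr ?_
    filter_upwards with u
    rw [abs_mul, abs_of_pos (Real.exp_pos _)]
    norm_num
  have hFμ_int : Integrable (F μ) := by
    refine Integrable.mono' (hexp_int.const_mul (c * C)) ((hFcont μ).aestronglyMeasurable) ?_
    filter_upwards with u
    have : |F μ u| ≤ c * (C * Real.exp (-u ^ 2)) := by
      rw [hF, abs_mul]
      exact mul_le_mul (by rw [abs_of_nonneg (hp_nonneg _)]; exact hp_le _)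
        (hCf u) (abs_nonneg _) hc0.le
    simpa [Real.norm_eq_abs, mul_assoc] using this
  set bound : ℝ → ℝ := fun u => c * C / σ ^ 2 * ((|u| + (|μ| + 1)) * Real.exp (-u ^ 2))
    with hbound_def
  have hbound_int : Integrable bound := by
    have : Integrable (fun u : ℝ => (|u| + (|μ| + 1)) * Real.exp (-u ^ 2)) := by
      have h2 : Integrable (fun u : ℝ => (|μ| + 1) * Real.exp (-u ^ 2)) :=
        hexp_int.const_mul _
      simpa [add_mul, Pi.add_def] using habs_int.add h2
    simpa [hbound_def, mul_assoc] using this.const_mul (c * C / σ ^ 2)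
  have h_bound : ∀ u : ℝ, ∀ m ∈ Metric.ball μ 1, ‖F' m u‖ ≤ bound u := by
    intro u m hm
    have hm1 : |m| ≤ |μ| + 1 := by
      have := mem_ball_iff_norm.mp hm
      have h' : |m - μ| ≤ 1 := le_of_lt (by simpa [Real.norm_eq_abs] using this)
      calc |m| = |m - μ + μ| := by ring_nf
        _ ≤ |m - μ| + |μ| := abs_add_le _ _
        _ ≤ |μ| + 1 := by linarith
    have h1 : |p ((u - m) / σ)| ≤ c := by
      rw [abs_of_nonneg (hp_nonneg _)]; exact hp_le _
    have h2 : |(u - m) / σ ^ 2| ≤ (|u| + (|μ| + 1)) / σ ^ 2 := by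
      rw [abs_div, abs_of_pos (by positivity : (0:ℝ) < σ ^ 2)]
      apply div_le_div_of_nonneg_right ?_ (by positivity)
      · calc |u - m| ≤ |u| + |m| := abs_sub _ _
          _ ≤ |u| + (|μ| + 1) := by linarith
    have e : ‖F' m u‖ = |p ((u - m) / σ)| * |(u - m) / σ ^ 2| * |f u| := by
      simp only [hF', Real.norm_eq_abs]
      rw [abs_mul, abs_mul]
    rw [e]
    calc |p ((u - m) / σ)| * |(u - m) / σ ^ 2| * |f u|
        ≤ c * ((|u| + (|μ| + 1)) / σ ^ 2) * (C * Real.exp (-u ^ 2)) := by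
          apply mul_le_mul (mul_le_mul h1 h2 (abs_nonneg _) hc0.le) (hCf u) (abs_nonneg _)
          positivity
      _ = bound u := by rw [hbound_def]; field_simp
  -- differentiate under the integral sign
  have main := hasDerivAt_integral_of_dominated_loc_of_deriv_le (μ := volume)
    (F := F) (F' := F') (x₀ := μ) (bound := bound) (Metric.ball_mem_nhds μ one_pos)
    (Eventually.of_forall fun m => (hFcont m).aestronglyMeasurable)
    hFμ_int ((hF'cont μ).aestronglyMeasurable)
    (Eventually.of_forall h_bound) hbound_int
    (Eventually.of_forall fun u m _ => hderiv u m)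
  have hmain : HasDerivAt (fun m => σ⁻¹ * ∫ u, F m u) (σ⁻¹ * ∫ u, F' μ u) μ :=
    main.2.const_mul σ⁻¹
  -- identify functions and values
  have hfun : (fun m : ℝ => ∫ z, f (m + σ * z) ∂(gaussianReal 0 1))
      = fun m => σ⁻¹ * ∫ u, F m u := funext key
  rw [hfun]
  convert hmain using 1
  -- now identify the derivative value
  rw [aux_integral_gaussian, hpdf]
  have h1 : (fun z => p z * (f (μ + σ * z) * z))
      = fun z => (fun u => p ((u - μ) / σ) * f u * ((u - μ) / σ)) (μ + σ * z) := by
    funext z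
    simp only []
    rw [show (μ + σ * z - μ) / σ = z by field_simp; ring]
    ring
  rw [h1, aux_subst (fun u => p ((u - μ) / σ) * f u * ((u - μ) / σ)) hσ μ]
  have h2 : (fun u => F' μ u) = fun u => (p ((u - μ) / σ) * f u * ((u - μ) / σ)) * σ⁻¹ := by
    funext u
    simp only [hF']
    field_simp
  rw [h2, integral_mul_const]
  field_simp
end

section
/- Let φ : ℝ → ℝ be 1-Lipschitz with φ(0) = 0, let σ_w > 0, and set β := (σ_w²/2) · ∫_ℝ z² |z² − 1| dγ(z), where γ = N(0,1). Define T : [0,∞) → ℝ by T(s) = σ_w² ∫_ℝ φ(u)² dN(0, s + 1)(u). Then for all a, b ≥ 0, |T(a) − T(b)| ≤ β · |a − b|. -/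
open MeasureTheory ProbabilityTheory Real Filter
open scoped NNReal ENNReal

noncomputable def gexp (x : ℝ) : ℝ := Real.exp (-(1/2 : ℝ) * x ^ 2)

lemma integrable_pow_gexp (n : ℕ) : Integrable (fun x : ℝ => x ^ n * gexp x) := by
  have hn : (-1 : ℝ) < (n : ℝ) := lt_of_lt_of_le (by norm_num) (Nat.cast_nonneg n)
  have h := integrable_rpow_mul_exp_neg_mul_sq (b := 1/2) (by norm_num) hn
  simpa [gexp, Real.rpow_natCast] using h

lemma tendsto_pow_gexp (n : ℕ) : Tendsto (fun x : ℝ => x ^ n * gexp x) atTop (nhds 0) := by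
  have h := rpow_mul_exp_neg_mul_sq_isLittleO_exp_neg (b := 1/2) (by norm_num) (n : ℝ)
  have h0 : Tendsto (fun x : ℝ => Real.exp (-(1/2) * x)) atTop (nhds 0) := by
    apply Real.tendsto_exp_atBot.comp
    apply Tendsto.const_mul_atTop_of_neg (by norm_num : (-(1/2):ℝ) < 0) tendsto_id
  have := h.trans_tendsto h0
  refine this.congr' ?_
  filter_upwards [eventually_gt_atTop (0:ℝ)] with x hx
  rw [Real.rpow_natCast]; rfl

lemma integral_deriv_eq_zero (F F' : ℝ → ℝ) (hd : ∀ x, HasDerivAt F (F' x) x)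
    (hint : Integrable F') (htop : Tendsto F atTop (nhds 0))
    (hbot : Tendsto F atBot (nhds 0)) : ∫ x, F' x = 0 := by
  have h1 : ∫ x in Set.Ioi (0:ℝ), F' x = 0 - F 0 :=
    integral_Ioi_of_hasDerivAt_of_tendsto (hd 0).continuousAt.continuousWithinAt
      (fun x _ => hd x) hint.integrableOn htop
  have h2 : ∫ x in Set.Iic (0:ℝ), F' x = F 0 - 0 :=
    integral_Iic_of_hasDerivAt_of_tendsto (hd 0).continuousAt.continuousWithinAt
      (fun x _ => hd x) hint.integrableOn hbot
  rw [← intervalIntegral.integral_Iic_add_Ioi (f := F') hint.integrableOn hint.integrableOn, h1, h2]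
  ring

lemma hasDerivAt_gexp (x : ℝ) : HasDerivAt gexp (-x * gexp x) x := by
  have h : HasDerivAt (fun x : ℝ => -(1/2 : ℝ) * x ^ 2) (-x) x := by
    have := (hasDerivAt_pow 2 x).const_mul (-(1/2:ℝ))
    exact this.congr_deriv (by push_cast; ring)
  have := h.exp
  exact this.congr_deriv (by simp [gexp]; ring)

lemma moment2 : ∫ x, x ^ 2 * gexp x = ∫ x, gexp x := by
  have hd : ∀ x : ℝ, HasDerivAt (fun x => x * gexp x) ((1 - x ^ 2) * gexp x) x := by
    intro x
    have := (hasDerivAt_id x).mul (hasDerivAt_gexp x)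
    exact this.congr_deriv (by simp [gexp]; ring)
  have hint : Integrable (fun x : ℝ => (1 - x ^ 2) * gexp x) := by
    have := (integrable_pow_gexp 0).sub (integrable_pow_gexp 2)
    simpa [sub_mul, Pi.sub_def] using this
  have htop : Tendsto (fun x : ℝ => x * gexp x) atTop (nhds 0) := by
    simpa using tendsto_pow_gexp 1
  have hbot : Tendsto (fun x : ℝ => x * gexp x) atBot (nhds 0) := by
    have h := (tendsto_pow_gexp 1).neg
    rw [neg_zero] at h
    have := h.comp tendsto_neg_atBot_atTop
    refine this.congr fun x => ?_
    simp [gexp, Function.comp]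
  have h0 := integral_deriv_eq_zero _ _ hd hint htop hbot
  have hsub : ∫ x, (1 - x ^ 2) * gexp x = (∫ x, gexp x) - ∫ x, x ^ 2 * gexp x := by
    rw [show (fun x : ℝ => (1 - x^2) * gexp x) = fun x => gexp x - x^2 * gexp x by
      funext x; ring]
    exact integral_sub (by simpa using integrable_pow_gexp 0) (integrable_pow_gexp 2)
  rw [hsub] at h0
  linarith

lemma moment4 : ∫ x, x ^ 4 * gexp x = 3 * ∫ x, gexp x := by
  have hd : ∀ x : ℝ, HasDerivAt (fun x => (x ^ 3 + 3 * x) * gexp x)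
      ((3 - x ^ 4) * gexp x) x := by
    intro x
    have h1 : HasDerivAt (fun x : ℝ => x ^ 3 + 3 * x) (3 * x ^ 2 + 3) x := by
      simpa [Pi.add_def] using (hasDerivAt_pow 3 x).add ((hasDerivAt_id x).const_mul 3)
    have := h1.mul (hasDerivAt_gexp x)
    exact this.congr_deriv (by simp [gexp]; ring)
  have hint : Integrable (fun x : ℝ => (3 - x ^ 4) * gexp x) := by
    have := ((integrable_pow_gexp 0).const_mul 3).sub (integrable_pow_gexp 4)
    simpa [sub_mul, mul_assoc, Pi.sub_def] using this
  have htop : Tendsto (fun x : ℝ => (x ^ 3 + 3 * x) * gexp x) atTop (nhds 0) := by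
    have := (tendsto_pow_gexp 3).add ((tendsto_pow_gexp 1).const_mul 3)
    simpa [add_mul, mul_assoc] using this
  have hbot : Tendsto (fun x : ℝ => (x ^ 3 + 3 * x) * gexp x) atBot (nhds 0) := by
    have h := (tendsto_pow_gexp 3).add ((tendsto_pow_gexp 1).const_mul 3)
    have h' := (h.comp tendsto_neg_atBot_atTop).neg
    norm_num at h'
    refine h'.congr fun x => ?_
    simp [gexp, Function.comp]; ring
  have h0 := integral_deriv_eq_zero _ _ hd hint htop hbot
  have hsub : ∫ x, (3 - x ^ 4) * gexp x = 3 * (∫ x, gexp x) - ∫ x, x ^ 4 * gexp x := by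
    rw [show (fun x : ℝ => (3 - x^4) * gexp x) = fun x => 3 * gexp x - x^4 * gexp x by
      funext x; ring]
    rw [integral_sub (((integrable_pow_gexp 0).const_mul 3).congr ?_) (integrable_pow_gexp 4),
      integral_const_mul]
    filter_upwards with x; simp
  rw [hsub] at h0
  linarith

lemma gaussianReal_eq_withDensity :
    gaussianReal 0 1 = (volume : Measure ℝ).withDensity
      (fun x => ((Real.toNNReal (gaussianPDFReal 0 1 x) : ℝ≥0) : ENNReal)) := by
  rw [gaussianReal_of_var_ne_zero 0 one_ne_zero]
  rfl

lemma pdf_eq (x : ℝ) : gaussianPDFReal 0 1 x = (Real.sqrt (2 * π))⁻¹ * gexp x := by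
  simp only [gaussianPDFReal, NNReal.coe_one, mul_one, sub_zero]
  rw [gexp]
  congr 2
  ring

lemma integral_gauss_eq (g : ℝ → ℝ) (hg : Measurable g) :
    ∫ x, g x ∂(gaussianReal 0 1) = (Real.sqrt (2 * π))⁻¹ * ∫ x, g x * gexp x := by
  rw [gaussianReal_eq_withDensity,
    integral_withDensity_eq_integral_smul (measurable_gaussianPDFReal 0 1).real_toNNReal g,
    ← integral_const_mul]
  congr 1; funext x
  rw [NNReal.smul_def, Real.coe_toNNReal _ (gaussianPDFReal_nonneg 0 1 x), pdf_eq,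
    smul_eq_mul]
  ring

lemma integrable_gauss (g : ℝ → ℝ) (hg : Measurable g)
    (hb : Integrable (fun x => g x * gexp x)) : Integrable g (gaussianReal 0 1) := by
  rw [gaussianReal_eq_withDensity,
    integrable_withDensity_iff_integrable_smul (measurable_gaussianPDFReal 0 1).real_toNNReal]
  refine ((hb.const_mul ((Real.sqrt (2 * π))⁻¹)).congr ?_)
  filter_upwards with x
  rw [NNReal.smul_def, Real.coe_toNNReal _ (gaussianPDFReal_nonneg 0 1 x), pdf_eq,
    smul_eq_mul]
  ring

lemma integral_gexp : ∫ x, gexp x = Real.sqrt (2 * π) := by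
  have := integral_gaussian (1/2)
  rw [show π / (1/2) = 2 * π by ring] at this
  simpa [gexp] using this

lemma sqrt_two_pi_pos : 0 < Real.sqrt (2 * π) := Real.sqrt_pos.mpr (by positivity)

lemma int2γ : Integrable (fun z : ℝ => z ^ 2) (gaussianReal 0 1) :=
  integrable_gauss _ (by fun_prop) (integrable_pow_gexp 2)

lemma int4γ : Integrable (fun z : ℝ => z ^ 4) (gaussianReal 0 1) :=
  integrable_gauss _ (by fun_prop) (integrable_pow_gexp 4)

lemma M2 : ∫ z, z ^ 2 ∂(gaussianReal 0 1) = 1 := by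
  rw [integral_gauss_eq _ (by fun_prop), moment2, integral_gexp]
  field_simp

lemma M4 : ∫ z, z ^ 4 ∂(gaussianReal 0 1) = 3 := by
  rw [integral_gauss_eq _ (by fun_prop), moment4, integral_gexp]
  field_simp

lemma intCγ : Integrable (fun z : ℝ => z ^ 2 * |z ^ 2 - 1|) (gaussianReal 0 1) := by
  refine (int4γ.add int2γ).mono' ?_ ?_
  · exact ((measurable_id.pow_const 2).mul ((measurable_id.pow_const 2).sub measurable_const).abs).aestronglyMeasurable
  · filter_upwards with z
    have h1 : |z ^ 2 - 1| ≤ z ^ 2 + 1 := by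
      rw [abs_sub_le_iff]; constructor <;> nlinarith [sq_nonneg z]
    rw [Real.norm_eq_abs, abs_mul, abs_of_nonneg (sq_nonneg z), abs_abs]
    simp only [Pi.add_apply]
    nlinarith [sq_nonneg z, sq_nonneg (z^2)]

lemma C_ge_two : 2 ≤ ∫ z, z ^ 2 * |z ^ 2 - 1| ∂(gaussianReal 0 1) := by
  have h : ∫ z, (z ^ 4 - z ^ 2) ∂(gaussianReal 0 1) = 2 := by
    rw [integral_sub int4γ int2γ, M4, M2]; norm_num
  rw [← h]
  refine integral_mono (int4γ.sub int2γ) intCγ fun z => ?_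
  have : z ^ 4 - z ^ 2 = z ^ 2 * (z ^ 2 - 1) := by ring
  rw [this]
  exact mul_le_mul_of_nonneg_left (le_abs_self _) (sq_nonneg z)

lemma gauss_map (s : ℝ) (hs : 0 ≤ s) :
    (gaussianReal 0 1).map (fun z => Real.sqrt (s + 1) * z)
      = gaussianReal 0 (Real.toNNReal (s + 1)) := by
  have h := gaussianReal_map_const_mul (μ := 0) (v := 1) (Real.sqrt (s + 1))
  simp only [mul_zero] at h
  convert h using 2
  · ext : 1
    simp [Real.coe_toNNReal _ (by linarith : (0:ℝ) ≤ s + 1),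
      Real.sq_sqrt (by linarith : (0:ℝ) ≤ s + 1)]


/-- The one-step variance map `T(s) = σ_w² ∫ φ(u)² dN(0, s+1)(u)` of the DEQ covariance
recursion is `β`-Lipschitz on `[0, ∞)`, where
`β = (σ_w²/2) ∫ z² |z² − 1| dγ(z)`. -/
theorem stmt10 (φ : ℝ → ℝ) (hφ : LipschitzWith 1 φ) (hφ0 : φ 0 = 0)
    (σw : ℝ) (hσw : 0 < σw)
    (β : ℝ) (hβ : β = σw ^ 2 / 2 * ∫ z, z ^ 2 * |z ^ 2 - 1| ∂(gaussianReal 0 1))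
    (T : ℝ → ℝ)
    (hT : ∀ s : ℝ, T s = σw ^ 2 * ∫ u, (φ u) ^ 2 ∂(gaussianReal 0 (Real.toNNReal (s + 1)))) :
    ∀ a b : ℝ, 0 ≤ a → 0 ≤ b → |T a - T b| ≤ β * |a - b| := by
  have hφc : Continuous φ := hφ.continuous
  have hφabs : ∀ u : ℝ, |φ u| ≤ |u| := by
    intro u
    have := hφ.dist_le_mul u 0
    simpa [hφ0, Real.dist_eq] using this
  have hTs : ∀ s : ℝ, 0 ≤ s →
      T s = σw ^ 2 * ∫ z, (φ (Real.sqrt (s + 1) * z)) ^ 2 ∂(gaussianReal 0 1) := by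
    intro s hs
    rw [hT s, ← gauss_map s hs,
      integral_map (f := fun u => φ u ^ 2) (measurable_const_mul _).aemeasurable
        ((hφc.pow 2).aestronglyMeasurable)]
  have hIntc : ∀ s : ℝ, 0 ≤ s →
      Integrable (fun z => (φ (Real.sqrt (s + 1) * z)) ^ 2) (gaussianReal 0 1) := by
    intro s hs
    refine (int2γ.const_mul (s + 1)).mono'
      (((hφc.comp (continuous_const.mul continuous_id)).pow 2).aestronglyMeasurable) ?_
    filter_upwards with z
    have h1 : |φ (Real.sqrt (s + 1) * z)| ≤ |Real.sqrt (s + 1) * z| := hφabs _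
    have h2 : |Real.sqrt (s + 1) * z| ^ 2 = (s + 1) * z ^ 2 := by
      rw [sq_abs, mul_pow, Real.sq_sqrt (by linarith : (0:ℝ) ≤ s + 1)]
    rw [Real.norm_eq_abs, abs_of_nonneg (sq_nonneg _), ← sq_abs]
    calc |φ (Real.sqrt (s + 1) * z)| ^ 2 ≤ |Real.sqrt (s + 1) * z| ^ 2 := by
          exact pow_le_pow_left₀ (abs_nonneg _) h1 2
      _ = (s + 1) * z ^ 2 := h2
  intro a b ha hb
  set ca := Real.sqrt (a + 1) with hca
  set cb := Real.sqrt (b + 1) with hcb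
  have hca0 : 0 ≤ ca := Real.sqrt_nonneg _
  have hcb0 : 0 ≤ cb := Real.sqrt_nonneg _
  have hca2 : ca ^ 2 = a + 1 := Real.sq_sqrt (by linarith)
  have hcb2 : cb ^ 2 = b + 1 := Real.sq_sqrt (by linarith)
  have hpt : ∀ z : ℝ, |(φ (ca * z)) ^ 2 - (φ (cb * z)) ^ 2| ≤ |a - b| * z ^ 2 := by
    intro z
    have h1 : |φ (ca * z) - φ (cb * z)| ≤ |ca - cb| * |z| := by
      have := hφ.dist_le_mul (ca * z) (cb * z)
      rw [Real.dist_eq, Real.dist_eq] at this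
      calc |φ (ca * z) - φ (cb * z)| ≤ 1 * |ca * z - cb * z| := this
        _ = |ca - cb| * |z| := by rw [one_mul, ← abs_mul]; ring_nf
    have h2 : |φ (ca * z) + φ (cb * z)| ≤ (ca + cb) * |z| := by
      calc |φ (ca * z) + φ (cb * z)| ≤ |φ (ca * z)| + |φ (cb * z)| := abs_add_le _ _
        _ ≤ |ca * z| + |cb * z| := add_le_add (hφabs _) (hφabs _)
        _ = (ca + cb) * |z| := by
            rw [abs_mul, abs_mul, abs_of_nonneg hca0, abs_of_nonneg hcb0]; ring
    have key : |(φ (ca * z)) ^ 2 - (φ (cb * z)) ^ 2|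
        = |φ (ca * z) + φ (cb * z)| * |φ (ca * z) - φ (cb * z)| := by
      rw [← abs_mul]; congr 1; ring
    rw [key]
    have h3 : |φ (ca * z) + φ (cb * z)| * |φ (ca * z) - φ (cb * z)|
        ≤ ((ca + cb) * |z|) * (|ca - cb| * |z|) :=
      mul_le_mul h2 h1 (abs_nonneg _) (by positivity)
    refine h3.trans (le_of_eq ?_)
    have h4 : (ca + cb) * |ca - cb| = |a - b| := by
      rw [← abs_of_nonneg (by positivity : (0:ℝ) ≤ ca + cb), ← abs_mul]
      congr 1
      nlinarith [hca2, hcb2]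
    calc ((ca + cb) * |z|) * (|ca - cb| * |z|) = ((ca + cb) * |ca - cb|) * |z| ^ 2 := by ring
      _ = |a - b| * z ^ 2 := by rw [h4, sq_abs]
  have hIa := hIntc a ha
  have hIb := hIntc b hb
  have step : |T a - T b| ≤ σw ^ 2 * |a - b| := by
    rw [hTs a ha, hTs b hb, ← mul_sub, abs_mul, abs_of_nonneg (sq_nonneg σw),
      ← integral_sub hIa hIb]
    refine mul_le_mul_of_nonneg_left ?_ (sq_nonneg σw)
    calc |∫ z, ((φ (ca * z)) ^ 2 - (φ (cb * z)) ^ 2) ∂(gaussianReal 0 1)|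
        ≤ ∫ z, |(φ (ca * z)) ^ 2 - (φ (cb * z)) ^ 2| ∂(gaussianReal 0 1) :=
          by simpa [Real.norm_eq_abs] using
            norm_integral_le_integral_norm (μ := gaussianReal 0 1)
              (fun z => (φ (ca * z)) ^ 2 - (φ (cb * z)) ^ 2)
      _ ≤ ∫ z, |a - b| * z ^ 2 ∂(gaussianReal 0 1) := by
          refine integral_mono (hIa.sub hIb).abs (int2γ.const_mul _) fun z => hpt z
      _ = |a - b| := by rw [integral_const_mul, M2, mul_one]
  refine step.trans ?_
  rw [hβ]
  have hC := C_ge_two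
  nlinarith [mul_le_mul_of_nonneg_right hC (abs_nonneg (a - b)), sq_nonneg σw]
end

section
/- Let φ : ℝ → ℝ be 1-Lipschitz, nonconstant, with φ(0) = 0, and let σ_w > 0 be small enough that β := (σ_w²/2) ∫_ℝ z² |z² − 1| dγ(z) < 1, where γ = N(0,1). Then the map T(s) = σ_w² ∫_ℝ φ(u)² dN(0, s + 1)(u) has a unique fixed point σ*² in [0, ∞), i.e. σ*² = σ_w² ∫_ℝ φ(u)² dN(0, σ*² + 1)(u), and this fixed point satisfies σ*² > 0. -/
open MeasureTheory ProbabilityTheory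


open MeasureTheory ProbabilityTheory Real
open scoped ENNReal NNReal

namespace Stmt12Aux

noncomputable def p (x : ℝ) : ℝ := gaussianPDFReal 0 1 x

lemma p_def (x : ℝ) : p x = (Real.sqrt (2 * π))⁻¹ * Real.exp (-x ^ 2 / 2) := by
  simp [p, gaussianPDFReal]

lemma p_eq : p = fun x => (Real.sqrt (2 * π))⁻¹ * Real.exp (-x ^ 2 / 2) := funext p_def

lemma p_nonneg (x : ℝ) : 0 ≤ p x := gaussianPDFReal_nonneg 0 1 x

lemma continuous_p : Continuous p := by
  rw [p_eq]
  continuity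

lemma hasDerivAt_p (x : ℝ) : HasDerivAt p (-x * p x) x := by
  have h1 : HasDerivAt (fun x : ℝ => -x ^ 2 / 2) (-x) x := by
    have := ((hasDerivAt_pow 2 x).neg.div_const 2)
    refine this.congr_deriv ?_
    ring
  have h2 := h1.exp.const_mul ((Real.sqrt (2 * π))⁻¹)
  rw [p_eq]
  refine h2.congr_deriv ?_
  simp only [p_def]
  ring

lemma integrable_pow_mul_p (k : ℕ) : Integrable (fun x => x ^ k * p x) := by
  have hb : (0:ℝ) < 1/2 := by norm_num
  have h := integrable_rpow_mul_exp_neg_mul_sq hb (s := k)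
    (by linarith [Nat.cast_nonneg (α := ℝ) k])
  simp_rw [Real.rpow_natCast] at h
  have h' : Integrable (fun x : ℝ => (Real.sqrt (2 * π))⁻¹ * |x ^ k * Real.exp (-(1/2) * x ^ 2)|) := h.abs.const_mul _
  refine h'.mono' ?_ (Filter.Eventually.of_forall fun x => ?_)
  · exact ((continuous_pow k).mul continuous_p).aestronglyMeasurable
  · rw [Real.norm_eq_abs, abs_mul, abs_pow, abs_of_nonneg (p_nonneg x), p_def,
      abs_mul, abs_pow, abs_of_nonneg (Real.exp_nonneg _)]
    have : -(1/2) * x ^ 2 = -x^2/2 := by ring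
    rw [this]
    exact le_of_eq (by ring)

end Stmt12Aux

namespace Stmt12Aux

lemma integrable_p : Integrable p := by simpa using integrable_pow_mul_p 0

lemma int_p_one : ∫ x, p x = 1 := integral_gaussianPDFReal_eq_one 0 one_ne_zero

lemma int_sq_p : ∫ x, x ^ 2 * p x = 1 := by
  have hd : ∀ x : ℝ, HasDerivAt (fun y => y * p y) (p x - x ^ 2 * p x) x := fun x => by
    have := (hasDerivAt_id x).mul (hasDerivAt_p x)
    refine this.congr_deriv ?_
    simp; ring
  have h := integral_eq_zero_of_hasDerivAt_of_integrable hd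
    (integrable_p.sub (integrable_pow_mul_p 2)) (by simpa using integrable_pow_mul_p 1)
  rw [integral_sub integrable_p (integrable_pow_mul_p 2), int_p_one] at h
  linarith

lemma int_pow4_p : ∫ x, x ^ 4 * p x = 3 := by
  have hd : ∀ x : ℝ, HasDerivAt (fun y => y ^ 3 * p y) (3 * (x ^ 2 * p x) - x ^ 4 * p x) x := fun x => by
    have := (hasDerivAt_pow 3 x).mul (hasDerivAt_p x)
    refine this.congr_deriv ?_
    push_cast
    ring
  have h := integral_eq_zero_of_hasDerivAt_of_integrable hd
    (((integrable_pow_mul_p 2).const_mul 3).sub (integrable_pow_mul_p 4))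
    (by simpa using integrable_pow_mul_p 3)
  rw [integral_sub ((integrable_pow_mul_p 2).const_mul 3) (integrable_pow_mul_p 4),
    integral_const_mul, int_sq_p] at h
  linarith

lemma gauss_eq : gaussianReal 0 1 = (volume : Measure ℝ).withDensity (fun x => ((p x).toNNReal : ℝ≥0∞)) := by
  rw [gaussianReal_of_var_ne_zero 0 one_ne_zero]
  rfl

lemma meas_pnn : Measurable (fun x => (p x).toNNReal) :=
  (measurable_gaussianPDFReal 0 1).real_toNNReal

lemma integral_gauss (f : ℝ → ℝ) : ∫ x, f x ∂(gaussianReal 0 1) = ∫ x, f x * p x := by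
  rw [gauss_eq, integral_withDensity_eq_integral_smul meas_pnn f]
  congr 1
  ext x
  simp [NNReal.smul_def, Real.coe_toNNReal _ (p_nonneg x)]
  ring

lemma integrable_gauss_iff (f : ℝ → ℝ) :
    Integrable f (gaussianReal 0 1) ↔ Integrable (fun x => f x * p x) := by
  rw [gauss_eq, integrable_withDensity_iff_integrable_smul meas_pnn]
  constructor <;> intro h <;> refine h.congr (Filter.Eventually.of_forall fun x => ?_) <;>
    simp [NNReal.smul_def, Real.coe_toNNReal _ (p_nonneg x)] <;> ring

lemma integrable_sq_gauss : Integrable (fun z => z ^ 2) (gaussianReal 0 1) :=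
  (integrable_gauss_iff _).2 (integrable_pow_mul_p 2)

lemma int_sq_gauss : ∫ z, z ^ 2 ∂(gaussianReal 0 1) = 1 := by
  rw [integral_gauss]; exact int_sq_p

lemma key_moment_ineq : (2:ℝ) ≤ ∫ z, z ^ 2 * |z ^ 2 - 1| ∂(gaussianReal 0 1) := by
  rw [integral_gauss]
  have hle : ∫ x, (x ^ 4 - x ^ 2) * p x ≤ ∫ x, (x ^ 2 * |x ^ 2 - 1|) * p x := by
    refine integral_mono ?_ ?_ fun x => ?_
    · have := (integrable_pow_mul_p 4).sub (integrable_pow_mul_p 2)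
      refine this.congr (Filter.Eventually.of_forall fun x => by simp only [Pi.sub_apply]; ring)
    · refine ((integrable_pow_mul_p 4).add (integrable_pow_mul_p 2)).mono'
        ((((continuous_pow 2).mul ((continuous_pow 2).sub continuous_const).abs).mul continuous_p).aestronglyMeasurable)
        (Filter.Eventually.of_forall fun x => ?_)
      simp only [Pi.add_apply]
      rw [Real.norm_eq_abs, abs_mul, abs_mul, abs_of_nonneg (p_nonneg x), abs_abs,
        abs_of_nonneg (sq_nonneg x)]
      have h1 : |x ^ 2 - 1| ≤ x ^ 2 + 1 := by
        rw [abs_sub_le_iff]; constructor <;> nlinarith [sq_nonneg x]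
      have h2 : x ^ 2 * |x ^ 2 - 1| ≤ x ^ 2 * (x ^ 2 + 1) :=
        mul_le_mul_of_nonneg_left h1 (sq_nonneg x)
      nlinarith [mul_le_mul_of_nonneg_right h2 (p_nonneg x)]
    · have h1 : x ^ 4 - x ^ 2 ≤ x ^ 2 * |x ^ 2 - 1| := by
        have := le_abs_self (x ^ 2 - 1)
        nlinarith [sq_nonneg x]
      exact mul_le_mul_of_nonneg_right h1 (p_nonneg x)
  have heq : ∫ x, (x ^ 4 - x ^ 2) * p x = 2 := by
    have : ∫ x, (x ^ 4 - x ^ 2) * p x = ∫ x, (x ^ 4 * p x - x ^ 2 * p x) := by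
      congr 1; ext x; ring
    rw [this, integral_sub (integrable_pow_mul_p 4) (integrable_pow_mul_p 2),
      int_pow4_p, int_sq_p]
    norm_num
  linarith

end Stmt12Aux

namespace Stmt12Aux

lemma gauss_cov (v : ℝ≥0) {f : ℝ → ℝ} (hf : Continuous f) :
    ∫ x, f x ∂(gaussianReal 0 v) = ∫ z, f (Real.sqrt v * z) ∂(gaussianReal 0 1) := by
  have hnn : (⟨(Real.sqrt v) ^ 2, sq_nonneg _⟩ : ℝ≥0) = v := by
    ext
    exact Real.sq_sqrt v.coe_nonneg
  have hmap : (gaussianReal 0 1).map (fun z => (Real.sqrt v) * z) = gaussianReal 0 v := by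
    have := gaussianReal_map_const_mul (μ := 0) (v := 1) (Real.sqrt v)
    rw [mul_zero, mul_one] at this
    convert this using 2
    exact hnn.symm
  rw [← hmap, integral_map (by fun_prop) (hf.aestronglyMeasurable)]

lemma habs_phi {φ : ℝ → ℝ} (hφ : LipschitzWith 1 φ) (hφ0 : φ 0 = 0) (u : ℝ) : |φ u| ≤ |u| := by
  have := hφ.dist_le_mul u 0
  simpa [Real.dist_eq, hφ0] using this

lemma integrable_phi_sq_gauss {φ : ℝ → ℝ} (hφ : LipschitzWith 1 φ) (hφ0 : φ 0 = 0) (c : ℝ) :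
    Integrable (fun z => (φ (c * z)) ^ 2) (gaussianReal 0 1) := by
  refine (integrable_sq_gauss.const_mul (c ^ 2)).mono'
    ((hφ.continuous.comp (continuous_const.mul continuous_id)).pow 2).aestronglyMeasurable
    (Filter.Eventually.of_forall fun z => ?_)
  rw [Real.norm_eq_abs, abs_of_nonneg (sq_nonneg _)]
  have h := habs_phi hφ hφ0 (c * z)
  calc (φ (c * z)) ^ 2 ≤ |c * z| ^ 2 := by
        rw [← sq_abs (φ (c*z))]; exact pow_le_pow_left₀ (abs_nonneg _) h 2
    _ = c ^ 2 * z ^ 2 := by rw [abs_mul, mul_pow, sq_abs, sq_abs]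

lemma key_lip {φ : ℝ → ℝ} (hφ : LipschitzWith 1 φ) (hφ0 : φ 0 = 0) {s t : ℝ}
    (hs : 0 ≤ s) (ht : 0 ≤ t) :
    |(∫ u, (φ u) ^ 2 ∂(gaussianReal 0 (Real.toNNReal (s + 1)))) -
      ∫ u, (φ u) ^ 2 ∂(gaussianReal 0 (Real.toNNReal (t + 1)))| ≤ |s - t| := by
  have hφc : Continuous (fun u => (φ u) ^ 2) := hφ.continuous.pow 2
  have hcs : ((Real.toNNReal (s + 1)) : ℝ) = s + 1 := Real.coe_toNNReal _ (by linarith)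
  have hct : ((Real.toNNReal (t + 1)) : ℝ) = t + 1 := Real.coe_toNNReal _ (by linarith)
  set a := Real.sqrt (s + 1) with ha
  set b := Real.sqrt (t + 1) with hb
  have ha2 : a ^ 2 = s + 1 := Real.sq_sqrt (by linarith)
  have hb2 : b ^ 2 = t + 1 := Real.sq_sqrt (by linarith)
  have ha0 : 0 ≤ a := Real.sqrt_nonneg _
  have hb0 : 0 ≤ b := Real.sqrt_nonneg _
  rw [gauss_cov _ hφc, gauss_cov _ hφc, hcs, hct, ← ha, ← hb]
  have hia := integrable_phi_sq_gauss hφ hφ0 a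
  have hib := integrable_phi_sq_gauss hφ hφ0 b
  rw [← integral_sub hia hib]
  have hbd : ∀ z : ℝ, |(φ (a * z)) ^ 2 - (φ (b * z)) ^ 2| ≤ z ^ 2 * |s - t| := by
    intro z
    have h1 : |φ (a * z) - φ (b * z)| ≤ |a - b| * |z| := by
      have := hφ.dist_le_mul (a * z) (b * z)
      rw [Real.dist_eq, Real.dist_eq] at this
      calc |φ (a * z) - φ (b * z)| ≤ 1 * |a * z - b * z| := this
        _ = |a - b| * |z| := by rw [one_mul, ← abs_mul]; ring_nf
    have h2 : |φ (a * z) + φ (b * z)| ≤ (a + b) * |z| := by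
      calc |φ (a * z) + φ (b * z)| ≤ |φ (a * z)| + |φ (b * z)| := abs_add_le _ _
        _ ≤ |a * z| + |b * z| := add_le_add (habs_phi hφ hφ0 _) (habs_phi hφ hφ0 _)
        _ = (a + b) * |z| := by rw [abs_mul, abs_mul, abs_of_nonneg ha0, abs_of_nonneg hb0]; ring
    have heq : (φ (a * z)) ^ 2 - (φ (b * z)) ^ 2
        = (φ (a * z) - φ (b * z)) * (φ (a * z) + φ (b * z)) := by ring
    rw [heq, abs_mul]
    calc |φ (a * z) - φ (b * z)| * |φ (a * z) + φ (b * z)|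
        ≤ (|a - b| * |z|) * ((a + b) * |z|) :=
          mul_le_mul h1 h2 (abs_nonneg _) (by positivity)
      _ = (|a - b| * (a + b)) * |z| ^ 2 := by ring
      _ = |s - t| * |z| ^ 2 := by
          congr 1
          rw [← abs_of_nonneg (by positivity : (0:ℝ) ≤ a + b), ← abs_mul]
          congr 1
          nlinarith
      _ = z ^ 2 * |s - t| := by rw [sq_abs]; ring
  calc |∫ z, ((φ (a * z)) ^ 2 - (φ (b * z)) ^ 2) ∂(gaussianReal 0 1)|
      ≤ ∫ z, |(φ (a * z)) ^ 2 - (φ (b * z)) ^ 2| ∂(gaussianReal 0 1) := by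
        simpa [Real.norm_eq_abs] using
          norm_integral_le_integral_norm (μ := gaussianReal 0 1)
            (f := fun z => (φ (a * z)) ^ 2 - (φ (b * z)) ^ 2)
    _ ≤ ∫ z, z ^ 2 * |s - t| ∂(gaussianReal 0 1) := by
        refine integral_mono (hia.sub hib).abs (integrable_sq_gauss.mul_const _) hbd
    _ = |s - t| := by rw [integral_mul_const, int_sq_gauss, one_mul]

end Stmt12Aux

open MeasureTheory ProbabilityTheory

/-- The one-step variance map `T(s) = σ_w² ∫ φ(u)² dN(0, s+1)(u)` has a unique fixed point
`σ*² ≥ 0`, and this fixed point is strictly positive. -/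
theorem stmt12 (φ : ℝ → ℝ) (hφ : LipschitzWith 1 φ) (hφ0 : φ 0 = 0)
    (hnc : ∃ x y : ℝ, φ x ≠ φ y)
    (σw β : ℝ) (hσw : 0 < σw)
    (hβdef : β = σw ^ 2 / 2 * ∫ z, z ^ 2 * |z ^ 2 - 1| ∂(gaussianReal 0 1))
    (hβ : β < 1) :
    (∃! sstar : ℝ, 0 ≤ sstar ∧
      sstar = σw ^ 2 * ∫ u, (φ u) ^ 2 ∂(gaussianReal 0 (Real.toNNReal (sstar + 1)))) ∧
    (∀ sstar : ℝ, 0 ≤ sstar →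
      sstar = σw ^ 2 * ∫ u, (φ u) ^ 2 ∂(gaussianReal 0 (Real.toNNReal (sstar + 1))) →
      0 < sstar) := by
  classical
  set g : ℝ → ℝ :=
    fun s => σw ^ 2 * ∫ u, (φ u) ^ 2 ∂(gaussianReal 0 (Real.toNNReal (s + 1))) with hg
  have hk0 : (0:ℝ) ≤ σw ^ 2 := sq_nonneg _
  have hkβ : σw ^ 2 ≤ β := by
    rw [hβdef]
    nlinarith [Stmt12Aux.key_moment_ineq, sq_nonneg σw]
  have hk1 : σw ^ 2 < 1 := lt_of_le_of_lt hkβ hβ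
  have hglip : ∀ s t : ℝ, 0 ≤ s → 0 ≤ t → |g s - g t| ≤ σw ^ 2 * |s - t| := by
    intro s t hs ht
    have h := Stmt12Aux.key_lip hφ hφ0 hs ht
    have heq : |g s - g t| = σw ^ 2 *
        |(∫ u, (φ u) ^ 2 ∂(gaussianReal 0 (Real.toNNReal (s + 1)))) -
          ∫ u, (φ u) ^ 2 ∂(gaussianReal 0 (Real.toNNReal (t + 1)))| := by
      rw [hg]
      simp only []
      rw [← mul_sub, abs_mul, abs_of_nonneg hk0]
    rw [heq]
    exact mul_le_mul_of_nonneg_left h hk0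
  have hg0 : 0 ≤ g 0 := mul_nonneg hk0 (integral_nonneg fun u => sq_nonneg _)
  set M := g 0 / (1 - σw ^ 2) with hM
  have h1k : (0:ℝ) < 1 - σw ^ 2 := by linarith
  have hM0 : 0 ≤ M := div_nonneg hg0 h1k.le
  have hcont : ContinuousOn (fun s => g s - s) (Set.Icc 0 M) := by
    have hl : LipschitzOnWith (σw ^ 2).toNNReal g (Set.Ici 0) := by
      rw [lipschitzOnWith_iff_dist_le_mul]
      intro x hx y hy
      rw [Real.dist_eq, Real.dist_eq, Real.coe_toNNReal _ hk0]
      exact hglip x y hx hy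
    exact (hl.continuousOn.mono (fun x hx => hx.1)).sub continuousOn_id
  have hfM : g M - M ≤ 0 := by
    have h := hglip M 0 hM0 le_rfl
    rw [sub_zero, abs_of_nonneg hM0] at h
    have h2 : g M - g 0 ≤ σw ^ 2 * M := (le_abs_self _).trans h
    have hMeq : (1 - σw ^ 2) * M = g 0 := by
      rw [hM, mul_div_cancel₀ _ h1k.ne']
    nlinarith
  have hf0 : (0:ℝ) ≤ g 0 - 0 := by simpa using hg0
  obtain ⟨s, hsmem, hfs⟩ := intermediate_value_Icc' hM0 hcont ⟨hfM, hf0⟩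
  have hsfix : s = g s := by
    simp only [] at hfs
    linarith [hfs]
  have huniq : ∀ y : ℝ, 0 ≤ y → y = g y → y = s := by
    intro y hy0 hyfix
    by_contra hne
    have h := hglip y s hy0 hsmem.1
    rw [← hyfix, ← hsfix] at h
    have habs : 0 < |y - s| := abs_pos.2 (sub_ne_zero.2 hne)
    nlinarith
  have hpos : ∀ sstar : ℝ, 0 ≤ sstar →
      sstar = σw ^ 2 * ∫ u, (φ u) ^ 2 ∂(gaussianReal 0 (Real.toNNReal (sstar + 1))) →
      0 < sstar := by
    intro t ht0 htfix
    rcases ht0.lt_or_eq with h | h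
    · exact h
    · exfalso
      rw [← h] at htfix
      rw [zero_add, Real.toNNReal_one] at htfix
      have hσ2 : σw ^ 2 ≠ 0 := by positivity
      have hint0 : ∫ u, (φ u) ^ 2 ∂(gaussianReal 0 1) = 0 := by
        rcases mul_eq_zero.1 htfix.symm with h' | h'
        · exact absurd h' hσ2
        · exact h'
      have hintg : Integrable (fun u => (φ u) ^ 2) (gaussianReal 0 1) := by
        have := Stmt12Aux.integrable_phi_sq_gauss hφ hφ0 1
        simpa using this
      have hae := (integral_eq_zero_iff_of_nonneg (fun u => sq_nonneg _) hintg).1 hint0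
      have hvol : (fun u => (φ u) ^ 2) =ᵐ[(volume : Measure ℝ)] 0 :=
        (gaussianReal_absolutelyContinuous' 0 one_ne_zero).ae_eq hae
      have hzero : (fun u => (φ u) ^ 2) = 0 :=
        ((hφ.continuous.pow 2).ae_eq_iff_eq volume continuous_zero).1 hvol
      obtain ⟨x, y, hxy⟩ := hnc
      have hx : φ x = 0 := by
        have := congrFun hzero x
        simpa using (pow_eq_zero_iff (two_ne_zero)).1 this
      have hy : φ y = 0 := by
        have := congrFun hzero y
        simpa using (pow_eq_zero_iff (two_ne_zero)).1 this
      exact hxy (hx.trans hy.symm)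
  refine ⟨⟨s, ⟨hsmem.1, hsfix⟩, ?_⟩, hpos⟩
  rintro y ⟨hy0, hyfix⟩
  exact huniq y hy0 hyfix
end

section
/- Let N ≥ 1, let A be an N×N real symmetric positive definite matrix with positive semidefinite square root S (so S is symmetric positive semidefinite and S² = A), and let φ : ℝ → ℝ be a nonconstant Lipschitz function. Define the N×N matrix B by B_{ij} = ∫_{ℝ^N} φ((S g)_i) · φ((S g)_j) dγ^{⊗N}(g), where γ^{⊗N} is the standard Gaussian measure on ℝ^N (the product of N copies of N(0,1)). Then B is symmetric positive definite: for every nonzero c ∈ ℝ^N, Σ_{i,j} c_i c_j B_{ij} > 0. -/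
open MeasureTheory ProbabilityTheory Matrix

lemma aux_gaussian_openPos : (gaussianReal 0 1).IsOpenPosMeasure := by
  constructor
  intro s hs hne h0
  rw [gaussianReal_of_var_ne_zero 0 one_ne_zero,
    withDensity_apply _ hs.measurableSet] at h0
  have hae : ∀ᵐ x ∂(volume.restrict s), gaussianPDF 0 1 x = 0 :=
    (lintegral_eq_zero_iff (measurable_gaussianPDF 0 1)).mp h0
  have h2 : ∀ᵐ _x ∂(volume.restrict s), False :=
    hae.mono fun x hx => (gaussianPDF_pos 0 one_ne_zero x).ne' hx
  rw [ae_iff] at h2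
  simp only [not_false_iff, Set.setOf_true, Measure.restrict_apply_univ] at h2
  exact (hs.measure_pos volume hne).ne' h2

lemma aux_map_eval_pi {ι : Type*} [Fintype ι] {α : ι → Type*} [∀ i, MeasurableSpace (α i)]
    (μ : ∀ i, Measure (α i)) [∀ i, IsProbabilityMeasure (μ i)] (k : ι) :
    MeasurePreserving (Function.eval k) (Measure.pi μ) (μ k) := by
  classical
  refine ⟨measurable_pi_apply k, ?_⟩
  ext s hs
  rw [Measure.map_apply (measurable_pi_apply k) hs, Set.eval_preimage, Measure.pi_pi]
  rw [Finset.prod_eq_single k (fun i _ hi => by simp [Function.update_of_ne hi])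
    (by simp)]
  simp

lemma aux_integrable_sq_gaussian : Integrable (fun x : ℝ => x ^ 2) (gaussianReal 0 1) := by
  rw [gaussianReal_of_var_ne_zero 0 one_ne_zero]
  rw [integrable_withDensity_iff (measurable_gaussianPDF 0 1)
    (Filter.Eventually.of_forall fun x => ENNReal.ofReal_lt_top)]
  have h : Integrable (fun x : ℝ => (Real.sqrt (2 * Real.pi * ((1:NNReal):ℝ)))⁻¹ *
      (x ^ (2:ℝ) * Real.exp (-(1/2) * x ^ 2))) volume :=
    (integrable_rpow_mul_exp_neg_mul_sq (b:=1/2) (s:=2) (by norm_num) (by norm_num)).const_mul _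
  apply h.congr
  filter_upwards with x
  rw [gaussianPDF, ENNReal.toReal_ofReal (gaussianPDFReal_nonneg 0 1 x), gaussianPDFReal]
  rw [show ((2:ℝ)) = ((2:ℕ):ℝ) by norm_num, Real.rpow_natCast]
  push_cast
  ring_nf

/-- One layer of the NNGP covariance recursion preserves strict positive definiteness:
if `A = S²` is positive definite with positive semidefinite square root `S` and `φ` is a
nonconstant Lipschitz function, then `B_{ij} = E[φ((Sg)_i) φ((Sg)_j)]`, with `g` a standard
Gaussian vector, is positive definite. -/
theorem stmt13 (N : ℕ) (hN : 1 ≤ N)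
    (A S : Matrix (Fin N) (Fin N) ℝ)
    (hA : A.PosDef) (hS : S.PosSemidef) (hSA : S * S = A)
    (φ : ℝ → ℝ) (K : NNReal) (hφ : LipschitzWith K φ)
    (hnc : ∃ x y : ℝ, φ x ≠ φ y)
    (B : Matrix (Fin N) (Fin N) ℝ)
    (hB : ∀ i j, B i j = ∫ g : Fin N → ℝ,
        φ (S.mulVec g i) * φ (S.mulVec g j) ∂(Measure.pi fun _ => gaussianReal 0 1)) :
    B.PosDef := by
  classical
  set μ : Measure (Fin N → ℝ) := Measure.pi fun _ => gaussianReal 0 1 with hμ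
  haveI : IsProbabilityMeasure μ := by rw [hμ]; infer_instance
  haveI : (gaussianReal (0:ℝ) 1).IsOpenPosMeasure := aux_gaussian_openPos
  haveI : μ.IsOpenPosMeasure := by rw [hμ]; infer_instance
  have hφc : Continuous φ := hφ.continuous
  have hlin : ∀ i : Fin N, Continuous fun g : Fin N → ℝ => S.mulVec g i := by
    intro i
    simp only [Matrix.mulVec, dotProduct]
    exact continuous_finset_sum _ fun k _ => continuous_const.mul (continuous_apply k)
  have hcont : ∀ i, Continuous fun g : Fin N → ℝ => φ (S.mulVec g i) :=
    fun i => hφc.comp (hlin i)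
  -- each φ((Sg)_i) is in L²
  have heval : ∀ k : Fin N, MemLp (fun g : Fin N → ℝ => g k) 2 μ := by
    intro k
    have h1 : MemLp (id : ℝ → ℝ) 2 (gaussianReal 0 1) := by
      rw [memLp_two_iff_integrable_sq aestronglyMeasurable_id]
      simpa using aux_integrable_sq_gaussian
    exact h1.comp_measurePreserving (aux_map_eval_pi _ k)
  have hmem : ∀ i, MemLp (fun g : Fin N → ℝ => φ (S.mulVec g i)) 2 μ := by
    intro i
    have hD : MemLp (fun g : Fin N → ℝ =>
        |φ 0| + ∑ k, (K * |S i k|) * |g k|) 2 μ := by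
      refine (memLp_const (|φ 0|)).add ?_
      refine memLp_finset_sum Finset.univ fun k _ => ?_
      exact ((heval k).norm.const_mul _)
    refine MemLp.of_le hD (hcont i).aestronglyMeasurable ?_
    filter_upwards with g
    have h0 : |φ (S.mulVec g i)| ≤ |φ 0| + K * |S.mulVec g i| := by
      have := hφ.dist_le_mul (S.mulVec g i) 0
      rw [Real.dist_eq, Real.dist_eq, sub_zero] at this
      have habs := abs_sub_abs_le_abs_sub (φ (S.mulVec g i)) (φ 0)
      linarith
    have h1 : (K : ℝ) * |S.mulVec g i| ≤ ∑ k, (K * |S i k|) * |g k| := by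
      rw [Matrix.mulVec, dotProduct]
      calc (K : ℝ) * |∑ k, S i k * g k| ≤ K * ∑ k, |S i k * g k| :=
            mul_le_mul_of_nonneg_left (Finset.abs_sum_le_sum_abs _ _) K.coe_nonneg
        _ = ∑ k, (K * |S i k|) * |g k| := by
            rw [Finset.mul_sum]; exact Finset.sum_congr rfl fun k _ => by
              rw [abs_mul]; ring
    have hDnn : (0:ℝ) ≤ |φ 0| + ∑ k, (K * |S i k|) * |g k| := by
      have : (0:ℝ) ≤ ∑ k, (K * |S i k|) * |g k| :=
        Finset.sum_nonneg fun k _ =>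
          mul_nonneg (mul_nonneg K.coe_nonneg (abs_nonneg _)) (abs_nonneg _)
      positivity
    simp only [Real.norm_eq_abs]
    rw [abs_of_nonneg hDnn]
    linarith
  -- integrability of products
  have hint : ∀ i j, Integrable
      (fun g => φ (S.mulVec g i) * φ (S.mulVec g j)) μ := by
    intro i j
    have h := (hmem j).smul (hmem i) (p := 2) (q := 2) (r := 1) (hpqr := ⟨by simp only [inv_one]; exact ENNReal.inv_two_add_inv_two⟩)
    rw [memLp_one_iff_integrable] at h
    simpa [smul_eq_mul, Pi.mul_def] using h
  rw [Matrix.posDef_iff_dotProduct_mulVec]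
  refine ⟨?_, ?_⟩
  · -- Hermitian
    ext i j
    simp only [Matrix.conjTranspose_apply, star_trivial, hB i j, hB j i]
    congr 1
    funext g
    ring
  · intro c hc
    set F : (Fin N → ℝ) → ℝ := fun g => ∑ i, c i * φ (S.mulVec g i) with hF
    have hFcont : Continuous F :=
      continuous_finset_sum _ fun i _ => continuous_const.mul (hcont i)
    have hFmem : MemLp F 2 μ :=
      memLp_finset_sum Finset.univ fun i _ => ((hmem i).const_mul _)
    have hF2int : Integrable (fun g => F g ^ 2) μ := hFmem.integrable_sq
    have key : ∫ g, F g ^ 2 ∂μ = ∑ i, c i * ∑ j, B i j * c j := by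
      have h1 : ∀ g : Fin N → ℝ, F g ^ 2
          = ∑ i, ∑ j, (c i * c j) * (φ (S.mulVec g i) * φ (S.mulVec g j)) := by
        intro g
        rw [hF, sq, Finset.sum_mul_sum]
        exact Finset.sum_congr rfl fun i _ => Finset.sum_congr rfl fun j _ => by ring
      simp_rw [h1]
      rw [integral_finset_sum _ fun i _ =>
        integrable_finset_sum _ fun j _ => ((hint i j).const_mul _)]
      refine Finset.sum_congr rfl fun i _ => ?_
      rw [integral_finset_sum _ fun j _ => ((hint i j).const_mul _), Finset.mul_sum]
      refine Finset.sum_congr rfl fun j _ => ?_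
      rw [integral_const_mul, hB i j]
      ring
    have hgoal : dotProduct (star c) (B *ᵥ c) = ∑ i, c i * ∑ j, B i j * c j := by
      simp [dotProduct, Matrix.mulVec]
    rw [hgoal, ← key]
    have hnonneg : 0 ≤ ∫ g, F g ^ 2 ∂μ := integral_nonneg fun g => sq_nonneg _
    refine lt_of_le_of_ne hnonneg (Ne.symm fun h0 => ?_)
    have hae : (fun g => F g ^ 2) =ᵐ[μ] 0 :=
      (integral_eq_zero_iff_of_nonneg (fun g => sq_nonneg _) hF2int).mp h0
    have hae' : F =ᵐ[μ] (fun _ => 0) := hae.mono fun g hg => by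
      have : F g ^ 2 = 0 := hg
      exact (pow_eq_zero_iff two_ne_zero).mp this
    have hF0 : F = fun _ => 0 := (hFcont.ae_eq_iff_eq (μ := μ) continuous_const).mp hae'
    -- surjectivity of S.mulVec
    have hdetA : A.det ≠ 0 := hA.det_pos.ne'
    have hdet : IsUnit S.det := by
      refine isUnit_iff_ne_zero.mpr fun h => hdetA ?_
      rw [← hSA, Matrix.det_mul, h, mul_zero]
    have hsurj : Function.Surjective S.mulVec :=
      Matrix.mulVec_surjective_iff_isUnit.mpr ((Matrix.isUnit_iff_isUnit_det S).mpr hdet)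
    have hall : ∀ u : Fin N → ℝ, ∑ i, c i * φ (u i) = 0 := by
      intro u
      obtain ⟨g, rfl⟩ := hsurj u
      have := congrFun hF0 g
      simpa [hF] using this
    obtain ⟨a, b, hab⟩ := hnc
    obtain ⟨i₀, hi₀⟩ := Function.ne_iff.mp hc
    simp only [Pi.zero_apply] at hi₀
    have h1 := hall (Function.update (fun _ => b) i₀ a)
    have h2 := hall (fun _ => b)
    have h3 : c i₀ * φ a - c i₀ * φ b = 0 := by
      have hsub : (∑ i, c i * φ (Function.update (fun _ => b) i₀ a i))
          - ∑ i, c i * φ b = c i₀ * φ a - c i₀ * φ b := by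
        rw [← Finset.sum_sub_distrib]
        rw [Finset.sum_eq_single i₀
          (fun i _ hi => by rw [Function.update_of_ne hi]; ring)
          (fun h => absurd (Finset.mem_univ i₀) h)]
        rw [Function.update_self]
      rw [h1, h2] at hsub
      linarith [hsub]
    apply hab
    have := mul_left_cancel₀ hi₀ (by linarith [h3] : c i₀ * φ a = c i₀ * φ b)
    exact this
end
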